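/- In the organization setting with α^D₁, α^D₂ > 0, fix a distortion level γ ∈ ℝ. Then the manager's expected equilibrium payoff is weakly increasing in the analyst's sensitivity: for any 0 ≤ β ≤ β' with γ ∈ Γ(β) (hence also γ ∈ Γ(β')), one has V^D(τ*(β', γ)) ≥ V^D(τ*(β, γ)). -/

import Mathlib

noncomputable section

/-! Organization setting (Section 5.1 of the paper), K = 2.

* `Talloc T` is the set `𝒯` of test allocations with budget `T`.
* `Gam aD1 aD2 β` is the set `Γ(β)` of feasible distortions.
* `lam1, lam2` are the parameters `λ₁(β,γ), λ₂(β,γ)` induced by the analyst's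
  weights `α^R(β,γ) = (β α^D₁ − γ α^D₂, β α^D₂ + γ α^D₁)`.
* `Gfun` is the researcher's reduced objective `G_{β,γ}`.
* `IsEqAlloc … τ` says that `τ` is the analyst's equilibrium test allocation:
  `τ = (0,0)` if `λ₁ ≤ 0` and `λ₂ ≤ 0`, and otherwise `τ` is a maximizer of
  `G_{β,γ}` over `𝒯` (which is in fact unique).
* `VD` is the manager's interim expected equilibrium payoff. -/

/-- The set of test allocations with budget `T`. -/
def Talloc (T : ℝ) : Set (ℝ × ℝ) := {τ | 0 ≤ τ.1 ∧ 0 ≤ τ.2 ∧ τ.1 + τ.2 ≤ T}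

/-- The set `Γ(β)` of feasible distortions. -/
def Gam (aD1 aD2 β : ℝ) : Set ℝ := Set.Icc (-(β * aD2 / aD1)) (β * aD1 / aD2)

/-- `λ₁(β,γ)`. -/
def lam1 (aD1 aD2 β γ : ℝ) : ℝ := (2 * β - 1) * aD1 ^ 2 - 2 * γ * aD1 * aD2

/-- `λ₂(β,γ)`. -/
def lam2 (aD1 aD2 β γ : ℝ) : ℝ := (2 * β - 1) * aD2 ^ 2 + 2 * γ * aD1 * aD2

/-- The researcher's reduced objective `G_{β,γ}(τ) = −λ₁ Σ̂₁(τ₁) − λ₂ Σ̂₂(τ₂)`. -/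
def Gfun (S1 S2 aD1 aD2 β γ : ℝ) (τ : ℝ × ℝ) : ℝ :=
  -(lam1 aD1 aD2 β γ) * (S1 / (1 + τ.1 * S1)) - lam2 aD1 aD2 β γ * (S2 / (1 + τ.2 * S2))

/-- `τ` is the analyst's equilibrium test allocation `τ*(β,γ)`. -/
def IsEqAlloc (S1 S2 T aD1 aD2 β γ : ℝ) (τ : ℝ × ℝ) : Prop :=
  (lam1 aD1 aD2 β γ ≤ 0 ∧ lam2 aD1 aD2 β γ ≤ 0 ∧ τ = (0, 0)) ∨
  (¬(lam1 aD1 aD2 β γ ≤ 0 ∧ lam2 aD1 aD2 β γ ≤ 0) ∧ τ ∈ Talloc T ∧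
    ∀ τ' ∈ Talloc T, Gfun S1 S2 aD1 aD2 β γ τ' ≤ Gfun S1 S2 aD1 aD2 β γ τ)

/-- The manager's interim expected equilibrium payoff `V^D`. -/
def VD (S1 S2 aD1 aD2 : ℝ) (τ : ℝ × ℝ) : ℝ :=
  -(aD1 ^ 2) * (S1 / (1 + τ.1 * S1)) - aD2 ^ 2 * (S2 / (1 + τ.2 * S2))

lemma fpos (S t : ℝ) (hS : 0 < S) (ht : 0 ≤ t) : 0 < 1 + t * S := by nlinarith

lemma f_le_S (S t : ℝ) (hS : 0 < S) (ht : 0 ≤ t) : S / (1 + t * S) ≤ S :=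
  div_le_self hS.le (by nlinarith)

lemma f_anti (S t t' : ℝ) (hS : 0 < S) (ht : 0 ≤ t) (htt : t ≤ t') :
    S / (1 + t' * S) ≤ S / (1 + t * S) := by
  apply div_le_div_of_nonneg_left hS.le (fpos S t hS ht)
  nlinarith

lemma f_inj (S a b : ℝ) (hS : 0 < S) (ha : 0 ≤ a) (hb : 0 ≤ b)
    (h : S / (1 + a * S) = S / (1 + b * S)) : a = b := by
  have hx := fpos S a hS ha
  have hy := fpos S b hS hb
  field_simp at h
  have h' : (a - b) * S = 0 := by linarith
  rcases mul_eq_zero.mp h' with h | h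
  · linarith
  · exact absurd h hS.ne'

lemma f_conv (S a b : ℝ) (hS : 0 < S) (ha : 0 ≤ a) (hb : 0 ≤ b) :
    2 * (S / (1 + (a + b) / 2 * S)) ≤ S / (1 + a * S) + S / (1 + b * S) := by
  have hx := fpos S a hS ha
  have hy := fpos S b hS hb
  have hm := fpos S ((a+b)/2) hS (by linarith)
  rw [div_add_div _ _ hx.ne' hy.ne', ← mul_div_assoc, div_le_div_iff₀ hm (mul_pos hx hy)]
  nlinarith [sq_nonneg ((a - b) * S)]

lemma f_strict_conv (S a b : ℝ) (hS : 0 < S) (ha : 0 ≤ a) (hb : 0 ≤ b) (hab : a ≠ b) :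
    2 * (S / (1 + (a + b) / 2 * S)) < S / (1 + a * S) + S / (1 + b * S) := by
  have hx := fpos S a hS ha
  have hy := fpos S b hS hb
  have hm := fpos S ((a+b)/2) hS (by linarith)
  have h0 : 0 < ((a - b) * S) ^ 2 :=
    lt_of_le_of_ne (sq_nonneg _) (Ne.symm (pow_ne_zero 2 (mul_ne_zero (sub_ne_zero.mpr hab) hS.ne')))
  rw [div_add_div _ _ hx.ne' hy.ne', ← mul_div_assoc, div_lt_div_iff₀ hm (mul_pos hx hy)]
  nlinarith [h0]

/-- When `λ₁ ≤ 0 < λ₂`, any maximizer of `G` over `𝒯` equals `(0, T)`. -/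
lemma max_eq_0T (S1 S2 T aD1 aD2 β γ : ℝ) (hS1 : 0 < S1) (hS2 : 0 < S2) (hT : 0 < T)
    (h1 : lam1 aD1 aD2 β γ ≤ 0) (h2 : 0 < lam2 aD1 aD2 β γ)
    (τ : ℝ × ℝ) (hτ : τ ∈ Talloc T)
    (hmax : ∀ τ' ∈ Talloc T, Gfun S1 S2 aD1 aD2 β γ τ' ≤ Gfun S1 S2 aD1 aD2 β γ τ) :
    τ = (0, T) := by
  obtain ⟨ht1, ht2, htT⟩ := hτ
  have h0T : ((0 : ℝ), T) ∈ Talloc T := ⟨le_refl 0, hT.le, by simp⟩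
  have hkey := hmax (0, T) h0T
  simp only [Gfun] at hkey
  have e1 : S1 / (1 + (0:ℝ) * S1) = S1 := by norm_num
  have hfa : S1 / (1 + τ.1 * S1) ≤ S1 := f_le_S S1 τ.1 hS1 ht1
  have hfb : S2 / (1 + T * S2) ≤ S2 / (1 + τ.2 * S2) := f_anti S2 τ.2 T hS2 ht2 (by linarith)
  rw [e1] at hkey
  -- deduce f₂(τ₂) ≤ f₂(T), hence equality
  have heq : S2 / (1 + τ.2 * S2) = S2 / (1 + T * S2) := by
    nlinarith [mul_nonneg (neg_nonneg.mpr h1) (sub_nonneg.mpr hfa)]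
  have h2T : τ.2 = T := f_inj S2 τ.2 T hS2 ht2 hT.le heq
  have h10 : τ.1 = 0 := by linarith
  exact Prod.ext h10 h2T

/-- When `λ₂ ≤ 0 < λ₁`, any maximizer of `G` over `𝒯` equals `(T, 0)`. -/
lemma max_eq_T0 (S1 S2 T aD1 aD2 β γ : ℝ) (hS1 : 0 < S1) (hS2 : 0 < S2) (hT : 0 < T)
    (h1 : 0 < lam1 aD1 aD2 β γ) (h2 : lam2 aD1 aD2 β γ ≤ 0)
    (τ : ℝ × ℝ) (hτ : τ ∈ Talloc T)
    (hmax : ∀ τ' ∈ Talloc T, Gfun S1 S2 aD1 aD2 β γ τ' ≤ Gfun S1 S2 aD1 aD2 β γ τ) :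
    τ = (T, 0) := by
  obtain ⟨ht1, ht2, htT⟩ := hτ
  have h0T : ((T : ℝ), (0:ℝ)) ∈ Talloc T := ⟨hT.le, le_refl 0, by simp⟩
  have hkey := hmax (T, 0) h0T
  simp only [Gfun] at hkey
  have e1 : S2 / (1 + (0:ℝ) * S2) = S2 := by norm_num
  have hfa : S2 / (1 + τ.2 * S2) ≤ S2 := f_le_S S2 τ.2 hS2 ht2
  have hfb : S1 / (1 + T * S1) ≤ S1 / (1 + τ.1 * S1) := f_anti S1 τ.1 T hS1 ht1 (by linarith)
  rw [e1] at hkey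
  have heq : S1 / (1 + τ.1 * S1) = S1 / (1 + T * S1) := by
    nlinarith [mul_nonneg (neg_nonneg.mpr h2) (sub_nonneg.mpr hfa)]
  have h1T : τ.1 = T := f_inj S1 τ.1 T hS1 ht1 hT.le heq
  have h20 : τ.2 = 0 := by linarith
  exact Prod.ext h1T h20

/-- When `λ₁ > 0` and `λ₂ > 0`, the maximizer of `G` over `𝒯` is unique. -/
lemma max_unique (S1 S2 T aD1 aD2 β γ : ℝ) (hS1 : 0 < S1) (hS2 : 0 < S2)
    (h1 : 0 < lam1 aD1 aD2 β γ) (h2 : 0 < lam2 aD1 aD2 β γ)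
    (τ τ' : ℝ × ℝ) (hτ : τ ∈ Talloc T) (hτ' : τ' ∈ Talloc T)
    (hmax : ∀ σ ∈ Talloc T, Gfun S1 S2 aD1 aD2 β γ σ ≤ Gfun S1 S2 aD1 aD2 β γ τ)
    (hmax' : ∀ σ ∈ Talloc T, Gfun S1 S2 aD1 aD2 β γ σ ≤ Gfun S1 S2 aD1 aD2 β γ τ') :
    τ = τ' := by
  obtain ⟨ht1, ht2, htT⟩ := hτ
  obtain ⟨ht1', ht2', htT'⟩ := hτ'
  by_contra hne
  have hm : ((τ.1 + τ'.1) / 2, (τ.2 + τ'.2) / 2) ∈ Talloc T :=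
    ⟨by dsimp; linarith, by dsimp; linarith, by dsimp; linarith⟩
  have hGm := hmax _ hm
  have hG1 := hmax τ' ⟨ht1', ht2', htT'⟩
  have hG2 := hmax' τ ⟨ht1, ht2, htT⟩
  have hGeq : Gfun S1 S2 aD1 aD2 β γ τ = Gfun S1 S2 aD1 aD2 β γ τ' := le_antisymm hG2 hG1
  -- strict convexity gives a contradiction
  have hc1 : 2 * (S1 / (1 + (τ.1 + τ'.1) / 2 * S1)) ≤ S1 / (1 + τ.1 * S1) + S1 / (1 + τ'.1 * S1) :=
    f_conv S1 τ.1 τ'.1 hS1 ht1 ht1'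
  have hc2 : 2 * (S2 / (1 + (τ.2 + τ'.2) / 2 * S2)) ≤ S2 / (1 + τ.2 * S2) + S2 / (1 + τ'.2 * S2) :=
    f_conv S2 τ.2 τ'.2 hS2 ht2 ht2'
  have hcomp : τ.1 ≠ τ'.1 ∨ τ.2 ≠ τ'.2 := by
    by_contra h
    push_neg at h
    exact hne (Prod.ext h.1 h.2)
  simp only [Gfun] at hGm hGeq
  rcases hcomp with h | h
  · have hs1 := f_strict_conv S1 τ.1 τ'.1 hS1 ht1 ht1' h
    nlinarith [mul_pos h1 (sub_pos.mpr hs1)]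
  · have hs2 := f_strict_conv S2 τ.2 τ'.2 hS2 ht2 ht2' h
    nlinarith [mul_pos h2 (sub_pos.mpr hs2)]

/-- Proposition 3 of the paper.  For a fixed distortion `γ`, the
manager's expected equilibrium payoff is weakly increasing in the analyst's
sensitivity `β`. -/
theorem stmt_9
    (S1 S2 T aD1 aD2 γ β β' : ℝ)
    (hS1 : 0 < S1) (hS2 : 0 < S2) (hT : 0 < T)
    (hD1 : 0 < aD1) (hD2 : 0 < aD2)
    (hβ0 : 0 ≤ β) (hββ' : β ≤ β') (hγ : γ ∈ Gam aD1 aD2 β) :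
    ∀ τ τ', IsEqAlloc S1 S2 T aD1 aD2 β γ τ → IsEqAlloc S1 S2 T aD1 aD2 β' γ τ' →
      VD S1 S2 aD1 aD2 τ ≤ VD S1 S2 aD1 aD2 τ' := by
  intro τ τ' hτ hτ'
  -- V is minimized at (0,0) over the feasible set
  have hVmin : ∀ σ : ℝ × ℝ, σ ∈ Talloc T →
      VD S1 S2 aD1 aD2 (0, 0) ≤ VD S1 S2 aD1 aD2 σ := by
    intro σ ⟨hs1, hs2, _⟩
    simp only [VD]
    have e1 := f_le_S S1 σ.1 hS1 hs1
    have e2 := f_le_S S2 σ.2 hS2 hs2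
    norm_num
    nlinarith [sq_nonneg aD1, sq_nonneg aD2]
  -- λ is monotone in β
  have hlam1m : lam1 aD1 aD2 β γ ≤ lam1 aD1 aD2 β' γ := by
    simp only [lam1]; nlinarith [sq_nonneg aD1]
  have hlam2m : lam2 aD1 aD2 β γ ≤ lam2 aD1 aD2 β' γ := by
    simp only [lam2]; nlinarith [sq_nonneg aD2]
  rcases hτ with ⟨-, -, hτ00⟩ | ⟨hnd, hτT, hτmax⟩
  · -- τ = (0,0): conclusion holds for any feasible τ'
    subst hτ00
    rcases hτ' with ⟨-, -, hτ'00⟩ | ⟨-, hτ'T, -⟩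
    · subst hτ'00; exact le_refl _
    · exact hVmin τ' hτ'T
  · rcases hτ' with ⟨h1', h2', -⟩ | ⟨-, hτ'T, hτ'max⟩
    · exact absurd ⟨le_trans hlam1m h1', le_trans hlam2m h2'⟩ hnd
    · -- both maximizers
      rcases eq_or_lt_of_le hββ' with heq | hlt
      · -- β = β': same objective, unique maximizer
        subst heq
        have hτeq : τ = τ' := by
          rcases le_or_gt (lam1 aD1 aD2 β γ) 0 with hl1 | hl1
          · have hl2 : 0 < lam2 aD1 aD2 β γ := by
              by_contra h; push_neg at h; exact hnd ⟨hl1, h⟩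
            rw [max_eq_0T S1 S2 T aD1 aD2 β γ hS1 hS2 hT hl1 hl2 τ hτT hτmax,
                max_eq_0T S1 S2 T aD1 aD2 β γ hS1 hS2 hT hl1 hl2 τ' hτ'T hτ'max]
          · rcases le_or_gt (lam2 aD1 aD2 β γ) 0 with hl2 | hl2
            · rw [max_eq_T0 S1 S2 T aD1 aD2 β γ hS1 hS2 hT hl1 hl2 τ hτT hτmax,
                  max_eq_T0 S1 S2 T aD1 aD2 β γ hS1 hS2 hT hl1 hl2 τ' hτ'T hτ'max]
            · exact max_unique S1 S2 T aD1 aD2 β γ hS1 hS2 hl1 hl2 τ τ' hτT hτ'T hτmax hτ'max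
        rw [hτeq]
      · -- β < β': revealed-preference argument
        have hid : ∀ σ : ℝ × ℝ, Gfun S1 S2 aD1 aD2 β' γ σ =
            Gfun S1 S2 aD1 aD2 β γ σ + 2 * (β' - β) * VD S1 S2 aD1 aD2 σ := by
          intro σ; simp only [Gfun, VD, lam1, lam2]; ring
        have hA := hτmax τ' hτ'T
        have hB := hτ'max τ hτT
        rw [hid τ, hid τ'] at hB
        nlinarith [hA, hB, hlt]
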